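/- arXiv:math/0604500 — 2 statements merged into one kernel-verified Lean document; each statement's English description precedes it below -/
import Mathlib

section
/- The wrapping map for the circle is a convolution homomorphism: for all Schwartz functions f, g : ℝ → ℂ and all x ∈ ℝ, the periodization of the Euclidean convolution equals the circle convolution of the periodizations, i.e. Σ_{n∈ℤ} (f *_ℝ g)(x + n) = ∫_0^1 (Φf)(x − y) (Φg)(y) dy, where (Φf)(x) = Σ_{n∈ℤ} f(x + n). -/
open Real MeasureTheory

/-- The wrapping (periodization) map `Φf(x) = Σ_{n∈ℤ} f(x + n)` from functions on `ℝ`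
to `1`-periodic functions (functions on the circle `ℝ/ℤ`). -/
noncomputable def wrap (f : ℝ → ℂ) (x : ℝ) : ℂ := ∑' n : ℤ, f (x + n)

namespace WrapProof

open ContinuousMap Set TopologicalSpace

/-- The continuous map underlying a Schwartz function. -/
noncomputable def cmap (f : SchwartzMap ℝ ℂ) : C(ℝ, ℂ) := ⟨⇑f, f.continuous⟩

lemma summable_restrict (f : SchwartzMap ℝ ℂ) (K : Compacts ℝ) :
    Summable fun n : ℤ =>
      ‖((cmap f).comp (ContinuousMap.addRight (n : ℝ))).restrict K‖ :=
  summable_of_isBigO (Real.summable_abs_int_rpow one_lt_two)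
    ((isBigO_norm_restrict_cocompact (cmap f) two_pos (f.isBigO_cocompact_rpow (-2))
      K).comp_tendsto Int.tendsto_coe_cofinite)

lemma summable_norm_shift (f : SchwartzMap ℝ ℂ) (t : ℝ) :
    Summable fun n : ℤ => ‖f (t + n)‖ := by
  refine (summable_restrict f ⟨Icc t t, isCompact_Icc⟩).of_nonneg_of_le
    (fun _ => norm_nonneg _) (fun n => ?_)
  have := ContinuousMap.norm_coe_le_norm
    (((cmap f).comp (ContinuousMap.addRight (n : ℝ))).restrict (Icc t t))
    ⟨t, by simp⟩
  simpa [cmap] using this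

/-- The compact set `[0,1]` (as `uIcc`). -/
noncomputable def K₀ : Compacts ℝ := ⟨uIcc (0 : ℝ) 1, isCompact_uIcc⟩

/-- The family `y ↦ f (x - y + k)` as continuous maps. -/
noncomputable def Fk (f : SchwartzMap ℝ ℂ) (x : ℝ) (k : ℤ) : C(ℝ, ℂ) :=
  ((cmap f).comp (ContinuousMap.addRight (k : ℝ))).comp
    ⟨fun y => x - y, (continuous_const.sub continuous_id)⟩

@[simp] lemma Fk_apply (f : SchwartzMap ℝ ℂ) (x : ℝ) (k : ℤ) (y : ℝ) :
    Fk f x k y = f (x - y + k) := rfl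

/-- The family `y ↦ g (y + m)` as continuous maps. -/
noncomputable def Gm (g : SchwartzMap ℝ ℂ) (m : ℤ) : C(ℝ, ℂ) :=
  (cmap g).comp (ContinuousMap.addRight (m : ℝ))

@[simp] lemma Gm_apply (g : SchwartzMap ℝ ℂ) (m : ℤ) (y : ℝ) :
    Gm g m y = g (y + m) := rfl

lemma summable_Fk (f : SchwartzMap ℝ ℂ) (x : ℝ) :
    Summable fun k : ℤ => ‖(Fk f x k).restrict (K₀ : Set ℝ)‖ := by
  refine (summable_restrict f ⟨Icc (x - 1) x, isCompact_Icc⟩).of_nonneg_of_le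
    (fun _ => norm_nonneg _) (fun k => ?_)
  rw [ContinuousMap.norm_le _ (norm_nonneg _)]
  rintro ⟨y, hy⟩
  have hy' : x - y ∈ Icc (x - 1) x := by
    rw [show (K₀ : Set ℝ) = Icc (0:ℝ) 1 by
      simp [K₀, uIcc_of_le (zero_le_one (α := ℝ))]] at hy
    exact ⟨by linarith [hy.2], by linarith [hy.1]⟩
  have := ContinuousMap.norm_coe_le_norm
    (((cmap f).comp (ContinuousMap.addRight (k : ℝ))).restrict (Icc (x - 1) x))
    ⟨x - y, hy'⟩
  exact this

lemma summable_Gm (g : SchwartzMap ℝ ℂ) :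
    Summable fun m : ℤ => ‖(Gm g m).restrict (K₀ : Set ℝ)‖ :=
  summable_restrict g K₀

end WrapProof

open WrapProof ContinuousMap Set TopologicalSpace in
/-- The wrapping map is a convolution homomorphism (abelian case `G = ℝ/ℤ`, `j ≡ 1`):
the periodization of a Euclidean convolution of Schwartz functions equals the circle
convolution of the periodizations. -/
theorem wrap_convolution (f g : SchwartzMap ℝ ℂ) (x : ℝ) :
    wrap (fun z : ℝ => ∫ y : ℝ, f (z - y) * g y) x
      = ∫ y in (0 : ℝ)..1, wrap (⇑f) (x - y) * wrap (⇑g) y := by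
  -- the doubly-indexed family of continuous maps
  set F : ℤ × ℤ → C(ℝ, ℂ) := fun p => Fk f x p.1 * Gm g p.2 with hF
  -- summability of the restricted norms
  have hFs : Summable fun p : ℤ × ℤ => ‖(F p).restrict (K₀ : Set ℝ)‖ := by
    refine Summable.of_nonneg_of_le (fun _ => norm_nonneg _) (fun p => ?_)
      (((summable_Fk f x).mul_of_nonneg (summable_Gm g)
        (fun _ => norm_nonneg _) (fun _ => norm_nonneg _)))
    have : (F p).restrict (K₀ : Set ℝ)
        = (Fk f x p.1).restrict (K₀ : Set ℝ) * (Gm g p.2).restrict (K₀ : Set ℝ) := rfl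
    rw [this]
    exact norm_mul_le _ _
  -- the interval integrals
  set J : ℤ × ℤ → ℂ := fun p => ∫ y in (0 : ℝ)..1, F p y with hJdef
  have hJnorm : ∀ p : ℤ × ℤ, ‖J p‖ ≤ ‖(F p).restrict (K₀ : Set ℝ)‖ := by
    intro p
    have : ‖J p‖ ≤ ‖(F p).restrict (K₀ : Set ℝ)‖ * |1 - (0 : ℝ)| := by
      refine intervalIntegral.norm_integral_le_of_norm_le_const (fun y hy => ?_)
      have hy' : y ∈ (K₀ : Set ℝ) := uIoc_subset_uIcc hy
      exact ContinuousMap.norm_coe_le_norm ((F p).restrict (K₀ : Set ℝ)) ⟨y, hy'⟩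
    simpa using this
  have hJ : Summable J := Summable.of_norm_bounded hFs hJnorm
  -- the reindexing equivalence (k, m) ↦ (k + m, m)
  set e : ℤ × ℤ ≃ ℤ × ℤ :=
    { toFun := fun p => (p.1 + p.2, p.2)
      invFun := fun p => (p.1 - p.2, p.2)
      left_inv := fun p => by simp
      right_inv := fun p => by simp } with he
  set I : ℤ × ℤ → ℂ :=
    fun q => ∫ y in (0 : ℝ)..1, f (x + q.1 - (y + q.2)) * g (y + q.2) with hIdef
  have hIJ : ∀ p : ℤ × ℤ, I (e p) = J p := by
    intro p
    refine intervalIntegral.integral_congr (fun y _ => ?_)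
    have harg : x + ((p.1 : ℝ) + p.2) - (y + p.2) = x - y + p.1 := by ring
    simp only [hIdef, he, hF, Equiv.coe_fn_mk]
    push_cast
    rw [harg]
    simp [Fk, Gm, cmap]
  have hI : Summable I := by
    have : I ∘ e = J := funext hIJ
    exact (e.summable_iff (f := I)).mp (this ▸ hJ)
  -- integrability of the translated convolution integrands
  have hbdd : ∃ C, ∀ t : ℝ, ‖f t‖ ≤ C :=
    ⟨‖f.toBoundedContinuousFunction‖, fun t => by
      simpa [SchwartzMap.toBoundedContinuousFunction_apply] using
        f.toBoundedContinuousFunction.norm_coe_le_norm t⟩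
  have hint : ∀ n : ℤ, Integrable (fun y : ℝ => f (x + n - y) * g y) := by
    intro n
    refine g.integrable.bdd_mul (c := hbdd.choose) ?_ ?_
    · exact (f.continuous.comp (continuous_const.sub continuous_id)).aestronglyMeasurable
    · exact Filter.Eventually.of_forall fun y => hbdd.choose_spec _
  calc
    wrap (fun z : ℝ => ∫ y : ℝ, f (z - y) * g y) x
        = ∑' n : ℤ, ∫ y : ℝ, f (x + n - y) * g y := rfl
    _ = ∑' n : ℤ, ∑' m : ℤ, I (n, m) := by
        refine tsum_congr (fun n => ?_)
        exact ((hint n).hasSum_intervalIntegral_comp_add_int).tsum_eq.symm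
    _ = ∑' q : ℤ × ℤ, I q := (Summable.tsum_prod hI).symm
    _ = ∑' p : ℤ × ℤ, J p := by
        rw [← e.tsum_eq I]
        exact tsum_congr hIJ
    _ = ∫ y in (0 : ℝ)..1, ∑' p : ℤ × ℤ, F p y :=
        intervalIntegral.tsum_intervalIntegral_eq_of_summable_norm hFs
    _ = ∫ y in (0 : ℝ)..1, wrap (⇑f) (x - y) * wrap (⇑g) y := by
        refine intervalIntegral.integral_congr (fun y _ => ?_)
        have h1 := summable_norm_shift f (x - y)
        have h2 := summable_norm_shift g y
        calc
          ∑' p : ℤ × ℤ, F p y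
              = ∑' p : ℤ × ℤ, f (x - y + p.1) * g (y + p.2) := by
                refine tsum_congr (fun p => ?_)
                simp [hF, Fk, Gm, cmap]
          _ = (∑' k : ℤ, f (x - y + k)) * ∑' m : ℤ, g (y + m) :=
              (tsum_mul_tsum_of_summable_norm h1 h2).symm
          _ = wrap (⇑f) (x - y) * wrap (⇑g) y := rfl
end

section
/- The wrapped heat kernel solves the heat equation on the circle: the function Q(t,x) = (2πt)^{−1/2} Σ_{n∈ℤ} e^{−(x+n)²/(2t)}, defined for t > 0 and x ∈ ℝ, satisfies ∂_t Q(t,x) = (1/2) ∂²_x Q(t,x) for all t > 0 and x ∈ ℝ. -/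
open Real MeasureTheory

/-- The wrapped heat kernel on the circle `ℝ/ℤ`, viewed as a `1`-periodic function on
`ℝ`: `Q_t(x) = (2πt)^{-1/2} Σ_{n∈ℤ} e^{-(x+n)²/(2t)}`. -/
noncomputable def wrappedHeatKernel (t x : ℝ) : ℝ :=
  (2 * π * t) ^ (-(1 : ℝ) / 2) * ∑' n : ℤ, Real.exp (-(x + n) ^ 2 / (2 * t))


lemma summable_aux (c : ℝ) (hc : 0 < c) (k : ℕ) :
    Summable (fun n : ℤ => (|n| ^ k : ℝ) * Real.exp (-c * n ^ 2)) := by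
  have h := summable_pow_mul_jacobiTheta₂_term_bound 0 (T := c / π) (div_pos hc pi_pos) k
  refine h.congr fun n => ?_
  congr 2
  field_simp
  ring

lemma summable_exp_aux (c : ℝ) (hc : 0 < c) :
    Summable (fun n : ℤ => Real.exp (-c * n ^ 2)) := by
  simpa using summable_aux c hc 0

noncomputable def cterm (t x : ℝ) (n : ℤ) : ℂ :=
  Complex.exp (Complex.ofReal (-(2 * π ^ 2 * n ^ 2) * t) + Complex.ofReal (2 * π * n * x) * Complex.I)

lemma cterm_re (t x : ℝ) (n : ℤ) :
    (cterm t x n).re = Real.exp (-(2 * π ^ 2 * n ^ 2) * t) * Real.cos (2 * π * n * x) := by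
  rw [cterm, Complex.exp_re]
  congr 2 <;>
  simp only [Complex.add_re, Complex.add_im, Complex.ofReal_re, Complex.ofReal_im,
    Complex.mul_re, Complex.mul_im, Complex.I_re, Complex.I_im] <;> ring

lemma summable_cterm (t : ℝ) (ht : 0 < t) (x : ℝ) : Summable (cterm t x) := by
  refine Summable.of_norm ?_
  have h : ∀ n : ℤ, ‖cterm t x n‖ = Real.exp (-(2 * π ^ 2 * t) * n ^ 2) := by
    intro n
    rw [cterm, Complex.norm_exp]
    congr 1
    simp only [Complex.add_re, Complex.ofReal_re, Complex.ofReal_im,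
      Complex.mul_re, Complex.I_re, Complex.I_im]
    ring
  rw [funext h]
  exact summable_exp_aux (2 * π ^ 2 * t) (by positivity)

noncomputable def heatF (t x : ℝ) : ℝ :=
  ∑' n : ℤ, Real.exp (-(2 * π ^ 2 * n ^ 2) * t) * Real.cos (2 * π * n * x)

lemma wrappedHeatKernel_eq (t : ℝ) (ht : 0 < t) (x : ℝ) :
    (2 * π * t) ^ (-(1 : ℝ) / 2) * (∑' n : ℤ, Real.exp (-(x + n) ^ 2 / (2 * t))) = heatF t x := by
  have h2πt : (0:ℝ) < 2 * π * t := by positivity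
  have hπ : (π:ℂ) ≠ 0 := Complex.ofReal_ne_zero.mpr pi_ne_zero
  have htc : (t:ℂ) ≠ 0 := Complex.ofReal_ne_zero.mpr ht.ne'
  have h2πtc : (2 * (π:ℂ) * t) ≠ 0 := mul_ne_zero (mul_ne_zero two_ne_zero hπ) htc
  set ra : ℝ := (2 * π * t)⁻¹ with hra
  set rb : ℝ := -x / (2 * π * t) with hrb
  have ha : 0 < (Complex.ofReal ra).re := by
    rw [Complex.ofReal_re]; exact inv_pos.mpr h2πt
  have H := Complex.tsum_exp_neg_quadratic ha (Complex.ofReal rb)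
  have hL : ∀ n : ℤ, Complex.exp (-(π:ℂ) * Complex.ofReal ra * n ^ 2
        + 2 * π * Complex.ofReal rb * n)
      = Complex.exp (Complex.ofReal (x ^ 2 / (2 * t))) *
          Complex.ofReal (Real.exp (-(x + n) ^ 2 / (2 * t))) := by
    intro n
    rw [Complex.ofReal_exp, ← Complex.exp_add]
    congr 1
    rw [hra, hrb]
    push_cast
    field_simp [h2πtc]
    ring
  have hR : ∀ n : ℤ, Complex.exp (-(π:ℂ) / Complex.ofReal ra *
        ((n:ℂ) + Complex.I * Complex.ofReal rb) ^ 2)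
      = Complex.exp (Complex.ofReal (x ^ 2 / (2 * t))) * cterm t x n := by
    intro n
    rw [cterm, ← Complex.exp_add]
    congr 1
    rw [hra, hrb]
    push_cast
    field_simp [h2πtc]
    linear_combination (-(x:ℂ)^2) * Complex.I_sq
  simp only [hL, hR] at H
  rw [tsum_mul_left, tsum_mul_left] at H
  have hexp_ne : Complex.exp (Complex.ofReal (x ^ 2 / (2 * t))) ≠ 0 := Complex.exp_ne_zero _
  have h12 : ((1/2 : ℝ) : ℂ) = (1/2 : ℂ) := by norm_num
  have hpow : (1 : ℂ) / (Complex.ofReal ra) ^ (1 / 2 : ℂ)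
      = Complex.ofReal ((2 * π * t) ^ (1 / 2 : ℝ)) := by
    rw [← h12, ← Complex.ofReal_cpow (inv_pos.mpr h2πt).le,
      Real.inv_rpow h2πt.le, one_div, ← Complex.ofReal_inv, inv_inv]
  have key : (∑' n : ℤ, (Real.exp (-(x + n) ^ 2 / (2 * t)) : ℂ))
      = Complex.ofReal ((2 * π * t) ^ (1 / 2 : ℝ)) * ∑' n : ℤ, cterm t x n := by
    refine mul_left_cancel₀ hexp_ne ?_
    rw [H, hpow]; ring
  have hsum : Summable (cterm t x) := summable_cterm t ht x
  have hre : (∑' n : ℤ, cterm t x n).re = heatF t x := by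
    rw [Complex.re_tsum hsum, heatF]
    exact tsum_congr fun n => cterm_re t x n
  have hreal : (∑' n : ℤ, Real.exp (-(x + n) ^ 2 / (2 * t)))
      = (2 * π * t) ^ (1 / 2 : ℝ) * heatF t x := by
    have h1 : ((∑' n : ℤ, Real.exp (-(x + n) ^ 2 / (2 * t)) : ℝ) : ℂ)
        = ∑' n : ℤ, (Real.exp (-(x + n) ^ 2 / (2 * t)) : ℂ) := Complex.ofReal_tsum _
    have h2 := congrArg Complex.re (h1.trans key)
    rw [Complex.ofReal_re] at h2
    rw [h2]
    simp only [Complex.mul_re, Complex.ofReal_re, Complex.ofReal_im, zero_mul, sub_zero]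
    rw [hre]
  rw [hreal, ← mul_assoc, ← Real.rpow_add h2πt]
  norm_num


lemma summable_term (t : ℝ) (ht : 0 < t) (x : ℝ) :
    Summable (fun n : ℤ => Real.exp (-(2 * π ^ 2 * n ^ 2) * t) * Real.cos (2 * π * n * x)) := by
  refine Summable.of_norm ?_
  have key := summable_aux (2 * π ^ 2 * t) (by positivity) 0
  simp only [pow_zero, one_mul] at key
  refine key.of_nonneg_of_le (fun n => norm_nonneg _) (fun n => ?_)
  rw [norm_mul, Real.norm_eq_abs, Real.norm_eq_abs, Real.abs_exp]
  have h1 : Real.exp (-(2 * π ^ 2 * n ^ 2) * t) = Real.exp (-(2 * π ^ 2 * t) * n ^ 2) := by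
    ring_nf
  rw [h1]
  exact mul_le_of_le_one_right (Real.exp_pos _).le (abs_cos_le_one _)

-- first x-derivative
lemma hasDerivAt_heatF_x (t : ℝ) (ht : 0 < t) (x : ℝ) :
    HasDerivAt (heatF t)
      (∑' n : ℤ, Real.exp (-(2 * π ^ 2 * n ^ 2) * t) * (-(2 * π * n) * Real.sin (2 * π * n * x)))
      x := by
  have hu : Summable (fun n : ℤ => 2 * π * ((|n| ^ 1 : ℝ) * Real.exp (-(2 * π ^ 2 * t) * n ^ 2))) :=
    (summable_aux (2 * π ^ 2 * t) (by positivity) 1).mul_left (2 * π)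
  refine hasDerivAt_tsum (y₀ := 0)
    (g := fun (n : ℤ) (y : ℝ) => Real.exp (-(2 * π ^ 2 * n ^ 2) * t) * Real.cos (2 * π * n * y))
    (g' := fun (n : ℤ) (y : ℝ) =>
      Real.exp (-(2 * π ^ 2 * n ^ 2) * t) * (-(2 * π * n) * Real.sin (2 * π * n * y)))
    hu (fun n y => ?_) (fun n y => ?_) ?_ x
  · have hlin : HasDerivAt (fun z : ℝ => 2 * π * n * z) (2 * π * n * 1) y :=
      (hasDerivAt_id y).const_mul (2 * π * (n:ℝ))
    have hcos := (Real.hasDerivAt_cos (2 * π * n * y)).comp y hlin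
    have := hcos.const_mul (Real.exp (-(2 * π ^ 2 * n ^ 2) * t))
    exact this.congr_deriv (by ring)
  · rw [norm_mul, Real.norm_eq_abs, Real.norm_eq_abs, Real.abs_exp]
    have h1 : Real.exp (-(2 * π ^ 2 * n ^ 2) * t) = Real.exp (-(2 * π ^ 2 * t) * n ^ 2) := by
      ring_nf
    have h2 : |(-(2 * π * n) * Real.sin (2 * π * n * y))| ≤ 2 * π * |(n:ℝ)| := by
      rw [abs_mul, abs_neg, abs_mul, abs_mul, abs_of_pos pi_pos, abs_of_pos two_pos]
      exact mul_le_of_le_one_right (by positivity) (abs_sin_le_one _)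
    calc Real.exp (-(2 * π ^ 2 * n ^ 2) * t) * |(-(2 * π * n) * Real.sin (2 * π * n * y))|
        ≤ Real.exp (-(2 * π ^ 2 * n ^ 2) * t) * (2 * π * |(n:ℝ)|) :=
          mul_le_mul_of_nonneg_left h2 (Real.exp_pos _).le
      _ = 2 * π * ((|n| ^ 1 : ℝ) * Real.exp (-(2 * π ^ 2 * t) * n ^ 2)) := by
          rw [h1]; push_cast; ring
  · simpa using summable_term t ht 0

-- second x-derivative
lemma hasDerivAt_heatF_x2 (t : ℝ) (ht : 0 < t) (x : ℝ) :
    HasDerivAt (fun y => ∑' n : ℤ,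
        Real.exp (-(2 * π ^ 2 * n ^ 2) * t) * (-(2 * π * n) * Real.sin (2 * π * n * y)))
      (∑' n : ℤ, Real.exp (-(2 * π ^ 2 * n ^ 2) * t) * (-(2 * π * n) ^ 2 * Real.cos (2 * π * n * x)))
      x := by
  have hu : Summable (fun n : ℤ =>
      (2 * π) ^ 2 * ((|n| ^ 2 : ℝ) * Real.exp (-(2 * π ^ 2 * t) * n ^ 2))) :=
    (summable_aux (2 * π ^ 2 * t) (by positivity) 2).mul_left ((2 * π) ^ 2)
  refine hasDerivAt_tsum (y₀ := 0)
    (g := fun (n : ℤ) (y : ℝ) =>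
      Real.exp (-(2 * π ^ 2 * n ^ 2) * t) * (-(2 * π * n) * Real.sin (2 * π * n * y)))
    (g' := fun (n : ℤ) (y : ℝ) =>
      Real.exp (-(2 * π ^ 2 * n ^ 2) * t) * (-(2 * π * n) ^ 2 * Real.cos (2 * π * n * y)))
    hu (fun n y => ?_) (fun n y => ?_) ?_ x
  · have hlin : HasDerivAt (fun z : ℝ => 2 * π * n * z) (2 * π * n * 1) y :=
      (hasDerivAt_id y).const_mul (2 * π * (n:ℝ))
    have hsin := (Real.hasDerivAt_sin (2 * π * n * y)).comp y hlin
    have := (hsin.const_mul (-(2 * π * (n:ℝ)))).const_mul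
      (Real.exp (-(2 * π ^ 2 * n ^ 2) * t))
    exact this.congr_deriv (by ring)
  · rw [norm_mul, Real.norm_eq_abs, Real.norm_eq_abs, Real.abs_exp]
    have h1 : Real.exp (-(2 * π ^ 2 * n ^ 2) * t) = Real.exp (-(2 * π ^ 2 * t) * n ^ 2) := by
      ring_nf
    have h2 : |(-(2 * π * n) ^ 2 * Real.cos (2 * π * n * y))| ≤ (2 * π) ^ 2 * (n:ℝ) ^ 2 :=
      calc |(-(2 * π * n) ^ 2 * Real.cos (2 * π * n * y))|
          = (2 * π * (n:ℝ)) ^ 2 * |Real.cos (2 * π * n * y)| := by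
            rw [abs_mul, abs_neg, abs_of_nonneg (sq_nonneg _)]
        _ ≤ (2 * π * (n:ℝ)) ^ 2 :=
            mul_le_of_le_one_right (sq_nonneg _) (abs_cos_le_one _)
        _ = (2 * π) ^ 2 * (n:ℝ) ^ 2 := by ring
    calc Real.exp (-(2 * π ^ 2 * n ^ 2) * t) * |(-(2 * π * n) ^ 2 * Real.cos (2 * π * n * y))|
        ≤ Real.exp (-(2 * π ^ 2 * n ^ 2) * t) * ((2 * π) ^ 2 * (n:ℝ) ^ 2) :=
          mul_le_mul_of_nonneg_left h2 (Real.exp_pos _).le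
      _ = (2 * π) ^ 2 * ((|n| ^ 2 : ℝ) * Real.exp (-(2 * π ^ 2 * t) * n ^ 2)) := by
          rw [h1]; push_cast [sq_abs]; ring
  · refine Summable.of_norm ?_
    have key := (summable_aux (2 * π ^ 2 * t) (by positivity) 1).mul_left (2 * π)
    refine key.of_nonneg_of_le (fun n => norm_nonneg _) (fun n => ?_)
    rw [norm_mul, Real.norm_eq_abs, Real.norm_eq_abs, Real.abs_exp]
    have h1 : Real.exp (-(2 * π ^ 2 * n ^ 2) * t) = Real.exp (-(2 * π ^ 2 * t) * n ^ 2) := by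
      ring_nf
    have h2 : |(-(2 * π * n) * Real.sin (2 * π * n * 0))| ≤ 2 * π * |(n:ℝ)| := by
      rw [abs_mul, abs_neg, abs_mul, abs_mul, abs_of_pos pi_pos, abs_of_pos two_pos]
      exact mul_le_of_le_one_right (by positivity) (abs_sin_le_one _)
    calc Real.exp (-(2 * π ^ 2 * n ^ 2) * t) * |(-(2 * π * n) * Real.sin (2 * π * n * 0))|
        ≤ Real.exp (-(2 * π ^ 2 * n ^ 2) * t) * (2 * π * |(n:ℝ)|) :=
          mul_le_mul_of_nonneg_left h2 (Real.exp_pos _).le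
      _ = 2 * π * ((|n| ^ 1 : ℝ) * Real.exp (-(2 * π ^ 2 * t) * n ^ 2)) := by
          rw [h1]; push_cast; ring

-- time derivative
lemma hasDerivAt_heatF_t (t : ℝ) (ht : 0 < t) (x : ℝ) :
    HasDerivAt (fun τ => heatF τ x)
      (∑' n : ℤ, -(2 * π ^ 2 * n ^ 2) *
        (Real.exp (-(2 * π ^ 2 * n ^ 2) * t) * Real.cos (2 * π * n * x)))
      t := by
  have hu : Summable (fun n : ℤ =>
      2 * π ^ 2 * ((|n| ^ 2 : ℝ) * Real.exp (-(π ^ 2 * t) * n ^ 2))) :=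
    (summable_aux (π ^ 2 * t) (by positivity) 2).mul_left (2 * π ^ 2)
  refine hasDerivAt_tsum_of_isPreconnected
    (g := fun (n : ℤ) (τ : ℝ) => Real.exp (-(2 * π ^ 2 * n ^ 2) * τ) * Real.cos (2 * π * n * x))
    (g' := fun (n : ℤ) (τ : ℝ) => -(2 * π ^ 2 * n ^ 2) *
      (Real.exp (-(2 * π ^ 2 * n ^ 2) * τ) * Real.cos (2 * π * n * x)))
    hu (isOpen_Ioi (a := t/2))
    (isPreconnected_Ioi) (fun n τ hτ => ?_) (fun n τ hτ => ?_)
    (by simp [ht] : t ∈ Set.Ioi (t/2)) ?_ (by simp [ht] : t ∈ Set.Ioi (t/2))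
  · have hlin : HasDerivAt (fun τ : ℝ => -(2 * π ^ 2 * n ^ 2) * τ)
        (-(2 * π ^ 2 * (n:ℝ) ^ 2) * 1) τ :=
      (hasDerivAt_id τ).const_mul (-(2 * π ^ 2 * (n:ℝ) ^ 2))
    have := (hlin.exp.mul_const (Real.cos (2 * π * n * x)))
    exact this.congr_deriv (by ring)
  · rw [Set.mem_Ioi] at hτ
    rw [norm_mul, norm_mul, Real.norm_eq_abs, Real.norm_eq_abs, Real.norm_eq_abs, Real.abs_exp]
    have habs : |(-(2 * π ^ 2 * (n:ℝ) ^ 2))| = 2 * π ^ 2 * (n:ℝ) ^ 2 := by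
      rw [abs_neg, abs_of_nonneg (by positivity)]
    have hexp : Real.exp (-(2 * π ^ 2 * n ^ 2) * τ) ≤ Real.exp (-(π ^ 2 * t) * n ^ 2) := by
      apply Real.exp_le_exp.mpr
      have hpos : (0:ℝ) ≤ π ^ 2 * (n:ℝ) ^ 2 * (2 * τ - t) :=
        mul_nonneg (by positivity) (by linarith)
      nlinarith [hpos]
    calc |(-(2 * π ^ 2 * (n:ℝ) ^ 2))| * (Real.exp (-(2 * π ^ 2 * n ^ 2) * τ)
          * |Real.cos (2 * π * n * x)|)
        ≤ (2 * π ^ 2 * (n:ℝ) ^ 2) * (Real.exp (-(π ^ 2 * t) * n ^ 2) * 1) := by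
          rw [habs]
          refine mul_le_mul_of_nonneg_left ?_ (by positivity)
          exact mul_le_mul hexp (abs_cos_le_one _) (abs_nonneg _) (Real.exp_pos _).le
      _ = 2 * π ^ 2 * ((|n| ^ 2 : ℝ) * Real.exp (-(π ^ 2 * t) * n ^ 2)) := by
          push_cast [sq_abs]; ring
  · exact summable_term t ht x

/-- The wrapped heat kernel solves the heat equation on the circle:
`∂_t Q(t,x) = (1/2) ∂²_x Q(t,x)` for all `t > 0` and `x ∈ ℝ`. -/
theorem wrappedHeatKernel_solves_heat_equation (t : ℝ) (ht : 0 < t) (x : ℝ) :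
    deriv (fun τ : ℝ => wrappedHeatKernel τ x) t
      = (1 / 2) * deriv (deriv (wrappedHeatKernel t)) x := by
  have hWF : ∀ τ : ℝ, 0 < τ → ∀ y : ℝ, wrappedHeatKernel τ y = heatF τ y := by
    intro τ hτ y
    exact wrappedHeatKernel_eq τ hτ y
  have hEv : (fun τ : ℝ => wrappedHeatKernel τ x) =ᶠ[nhds t] fun τ => heatF τ x := by
    filter_upwards [Ioi_mem_nhds ht] with τ hτ
    exact hWF τ hτ x
  rw [hEv.deriv_eq, (hasDerivAt_heatF_t t ht x).deriv]
  have hfun : wrappedHeatKernel t = heatF t := funext fun y => hWF t ht y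
  rw [hfun]
  have hd1 : deriv (heatF t) = fun y => ∑' n : ℤ,
      Real.exp (-(2 * π ^ 2 * n ^ 2) * t) * (-(2 * π * n) * Real.sin (2 * π * n * y)) :=
    funext fun y => (hasDerivAt_heatF_x t ht y).deriv
  rw [hd1, (hasDerivAt_heatF_x2 t ht x).deriv, ← tsum_mul_left]
  exact tsum_congr fun n => by ring
end
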